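/- With G_1(u) = sum over k from 0 to n-2 of (-1)^k * (k+1)/(k+3) * u_1^k * S_{n,n-2-k}(u) and T the linear map T(u_1,...,u_{n-1}) = (-u_1, u_2-u_1, ..., u_{n-1}-u_1), we have G_1(T u) = G_1(u) as polynomials, for all n ≥ 3. -/

import Mathlib

/-- The degree-`k` elementary symmetric function of `N` variables. -/
def esymmF {R : Type*} [CommRing R] (N k : ℕ) (u : Fin N → R) : R :=
  ∑ s ∈ Finset.powersetCard k (Finset.univ : Finset (Fin N)), ∏ i ∈ s, u i

open Finset

lemma sum_split_first {M : Type*} [AddCommMonoid M] (F : ℕ → M) (n : ℕ) :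
    ∑ k ∈ range (n+1), F k = F 0 + ∑ k ∈ range n, F (k+1) := by
  rw [Finset.sum_range_succ' F n, add_comm]

lemma binomL (m : ℕ) : ∀ c : ℕ, 1 ≤ c →
    ∑ k ∈ range (m+1), (-1:ℂ)^k * (m.choose k) / ((c:ℂ)+(k:ℂ)) =
      (m.factorial : ℂ) / ∏ i ∈ range (m+1), ((c:ℂ)+(i:ℂ)) := by
  induction m with
  | zero => intro c hc; simp
  | succ m ih =>
    intro c hc
    have hne : ∀ a b : ℕ, 1 ≤ a → ((a:ℂ)+(b:ℂ)) ≠ 0 := by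
      intro a b ha
      have h : ((a+b : ℕ) : ℂ) ≠ 0 := by
        simp only [ne_eq, Nat.cast_eq_zero]; omega
      push_cast at h; intro hc0; exact h (by linear_combination hc0)
    have hprodne : ∀ d : ℕ, 1 ≤ d → (∏ i ∈ range (m+1), ((d:ℂ)+(i:ℂ))) ≠ 0 := by
      intro d hd
      exact Finset.prod_ne_zero_iff.2 fun i _ => hne d i hd
    have key : ∑ k ∈ range (m+2), (-1:ℂ)^k * ((m+1).choose k) / ((c:ℂ)+(k:ℂ))
        = (∑ k ∈ range (m+1), (-1:ℂ)^k * (m.choose k) / ((c:ℂ)+(k:ℂ)))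
          - ∑ k ∈ range (m+1), (-1:ℂ)^k * (m.choose k) / (((c:ℂ)+1)+(k:ℂ)) := by
      rw [sum_split_first (fun k => (-1:ℂ)^k * ((m+1).choose k) / ((c:ℂ)+(k:ℂ))) (m+1),
          sum_split_first (fun k => (-1:ℂ)^k * (m.choose k) / ((c:ℂ)+(k:ℂ))) m]
      have hext : ∑ k ∈ range m, (-1:ℂ)^(k+1) * (m.choose (k+1)) / ((c:ℂ)+((k:ℂ)+1))
          = ∑ k ∈ range (m+1), (-1:ℂ)^(k+1) * (m.choose (k+1)) / ((c:ℂ)+((k:ℂ)+1)) := by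
        rw [sum_range_succ]; simp
      push_cast
      rw [hext, eq_sub_iff_add_eq, add_assoc, ← Finset.sum_add_distrib]
      congr 1
      · simp
      apply Finset.sum_congr rfl
      intro k hk
      rw [Nat.choose_succ_succ]
      push_cast
      ring
    rw [key, ih c hc]
    have ih2 := ih (c+1) (by omega)
    push_cast at ih2
    rw [ih2]
    have hPne := hprodne c hc
    have hQne : (∏ i ∈ range (m+1), ((c:ℂ)+1+(i:ℂ))) ≠ 0 := by
      have := hprodne (c+1) (by omega); push_cast at this; exact this
    have hcne : (c:ℂ) ≠ 0 := by
      have := hne c 0 hc; simpa using this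
    have hcm : ((c:ℂ)+(m:ℂ)+1) ≠ 0 := by
      have := hne c (m+1) hc; push_cast at this
      intro h0; exact this (by linear_combination h0)
    have h1 : ∏ i ∈ range (m+2), ((c:ℂ)+(i:ℂ)) = (∏ i ∈ range (m+1), ((c:ℂ)+(i:ℂ))) * ((c:ℂ)+(m:ℂ)+1) := by
      rw [prod_range_succ]; push_cast; ring
    have h2 : ((c:ℂ)) * ∏ i ∈ range (m+1), (((c:ℂ)+1)+(i:ℂ)) = ∏ i ∈ range (m+2), ((c:ℂ)+(i:ℂ)) := by
      rw [Finset.prod_range_succ' (fun i => (c:ℂ)+(i:ℂ)) (m+1)]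
      push_cast
      rw [mul_comm]
      congr 1
      · apply Finset.prod_congr rfl; intro i _; ring
      · simp
    rw [h1]
    rw [div_sub_div _ _ hPne hQne, div_eq_div_iff (by exact mul_ne_zero hPne hQne) (by exact mul_ne_zero hPne hcm)]
    have h3 : ∏ i ∈ range (m+1), (((c:ℂ)+1)+(i:ℂ)) = ((∏ i ∈ range (m+1), ((c:ℂ)+(i:ℂ))) * ((c:ℂ)+(m:ℂ)+1)) / (c:ℂ) := by
      rw [eq_div_iff hcne, mul_comm _ ((c:ℂ)), h2, h1]
    rw [h3]
    field_simp
    push_cast [Nat.factorial_succ]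
    ring

lemma castne (m a : ℕ) (ha : 0 < a) : ((m:ℂ) + (a:ℂ)) ≠ 0 := by
  intro h0
  have h1 : ((m:ℂ)+(a:ℂ)) = ((m+a : ℕ):ℂ) := by push_cast; ring
  rw [h1] at h0
  exact (Nat.cast_ne_zero.2 (by omega : m+a ≠ 0)) h0

lemma prod3 (m : ℕ) : (2:ℂ) * ∏ i ∈ range (m+1), ((3:ℂ)+(i:ℂ)) = ((m+3).factorial : ℂ) := by
  induction m with
  | zero => simp; norm_num [Nat.factorial]
  | succ m ih =>
    have hf : ((m+1+3).factorial : ℂ) = ((m:ℂ)+4) * ((m+3).factorial : ℂ) := by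
      rw [show m+1+3 = (m+3)+1 from rfl, Nat.factorial_succ]; push_cast; ring
    rw [prod_range_succ, hf]
    push_cast
    linear_combination ((m:ℂ)+4) * ih

lemma star3 (m : ℕ) :
    ∑ k ∈ range (m+1), (-1:ℂ)^k * (m.choose k) / ((k:ℂ)+3) =
      2 / (((m:ℂ)+1) * ((m:ℂ)+2) * ((m:ℂ)+3)) := by
  have h := binomL m 3 (by norm_num)
  have h2 : ∀ k ∈ range (m+1), (-1:ℂ)^k * (m.choose k) / ((k:ℂ)+3)
      = (-1:ℂ)^k * (m.choose k) / (((3:ℕ):ℂ)+(k:ℂ)) := by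
    intro k _; push_cast; ring_nf
  rw [Finset.sum_congr rfl h2, h]
  have hp := prod3 m
  have hfact : ((m+3).factorial : ℂ) = ((m:ℂ)+3)*((m:ℂ)+2)*((m:ℂ)+1)*(m.factorial:ℂ) := by
    rw [show m+3 = ((m+1)+1)+1 from rfl]
    push_cast [Nat.factorial_succ]
    ring
  have hprodval : (∏ i ∈ range (m+1), ((3:ℂ)+(i:ℂ))) = ((m:ℂ)+3)*((m:ℂ)+2)*((m:ℂ)+1)*(m.factorial:ℂ) / 2 := by
    rw [eq_div_iff (two_ne_zero)]
    linear_combination hp + hfact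
  rw [show ∏ i ∈ range (m+1), (((3:ℕ):ℂ)+(i:ℂ)) = ∏ i ∈ range (m+1), ((3:ℂ)+(i:ℂ)) by push_cast; rfl, hprodval]
  have hm1 : ((m:ℂ)+1) ≠ 0 := by have := castne m 1 one_pos; push_cast at this; exact this
  have hm2 : ((m:ℂ)+2) ≠ 0 := by have := castne m 2 two_pos; push_cast at this; exact this
  have hm3 : ((m:ℂ)+3) ≠ 0 := by have := castne m 3 three_pos; push_cast at this; exact this
  have hfne : (m.factorial : ℂ) ≠ 0 := Nat.cast_ne_zero.2 m.factorial_ne_zero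
  field_simp

lemma scalar (m : ℕ) :
    ∑ k ∈ range (m+1), (-1:ℂ)^k * (((k:ℂ)+1)/((k:ℂ)+3)) * (((m+1).choose (m-k) : ℕ) : ℂ) =
      ((m:ℂ)+1)/((m:ℂ)+3) - (m:ℂ)/((m:ℂ)+2) := by
  have hterm : ∀ k ∈ range (m+1),
      (-1:ℂ)^k * (((k:ℂ)+1)/((k:ℂ)+3)) * (((m+1).choose (m-k) : ℕ) : ℂ)
        = ((m:ℂ)+1) * ((-1:ℂ)^k * (m.choose k) / ((k:ℂ)+3)) := by
    intro k hk
    rw [mem_range] at hk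
    have h1 : (m+1).choose (m-k) = (m+1).choose (k+1) := by
      rw [show m - k = (m+1) - (k+1) by omega]
      exact Nat.choose_symm (by omega)
    have h2 : (m+1) * m.choose k = (m+1).choose (k+1) * (k+1) := Nat.add_one_mul_choose_eq m k
    have h2c : ((m:ℂ)+1) * (m.choose k : ℂ) = ((m+1).choose (k+1) : ℂ) * ((k:ℂ)+1) := by
      exact_mod_cast congrArg (Nat.cast : ℕ → ℂ) h2
    have hk3 : ((k:ℂ)+3) ≠ 0 := by have := castne k 3 three_pos; push_cast at this; exact this
    rw [h1]
    field_simp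
    linear_combination (-1:ℂ) * h2c
  rw [Finset.sum_congr rfl hterm, ← Finset.mul_sum, star3]
  have hm1 : ((m:ℂ)+1) ≠ 0 := by have := castne m 1 one_pos; push_cast at this; exact this
  have hm2 : ((m:ℂ)+2) ≠ 0 := by have := castne m 2 two_pos; push_cast at this; exact this
  have hm3 : ((m:ℂ)+3) ≠ 0 := by have := castne m 3 three_pos; push_cast at this; exact this
  field_simp
  ring

lemma count_supersets {ι : Type*} [DecidableEq ι] (J t : Finset ι) (ht : t ⊆ J) {m : ℕ}
    (hm : t.card ≤ m) :
    ((J.powersetCard m).filter (fun s => t ⊆ s)).card = (J.card - t.card).choose (m - t.card) := by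
  rw [← Finset.card_sdiff_of_subset ht, ← Finset.card_powersetCard (m - t.card) (J \ t)]
  apply Finset.card_bij' (fun s _ => s \ t) (fun w _ => w ∪ t)
  · intro s hs
    simp only [mem_filter, mem_powersetCard] at hs
    obtain ⟨⟨hsJ, hsc⟩, hts⟩ := hs
    rw [mem_powersetCard]
    constructor
    · exact sdiff_subset_sdiff hsJ (le_refl t)
    · rw [Finset.card_sdiff_of_subset hts, hsc]
  · intro w hw
    rw [mem_powersetCard] at hw
    obtain ⟨hwJ, hwc⟩ := hw
    have hdisj : Disjoint w t := Finset.disjoint_of_subset_left hwJ (Finset.sdiff_disjoint)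
    simp only [mem_filter, mem_powersetCard]
    refine ⟨⟨?_, ?_⟩, Finset.subset_union_right⟩
    · exact Finset.union_subset (hwJ.trans Finset.sdiff_subset) ht
    · rw [Finset.card_union_of_disjoint hdisj, hwc]
      omega
  · intro s hs
    simp only [mem_filter, mem_powersetCard] at hs
    exact Finset.sdiff_union_of_subset hs.2
  · intro w hw
    rw [mem_powersetCard] at hw
    exact Finset.union_sdiff_cancel_right (Finset.disjoint_of_subset_left hw.1 Finset.sdiff_disjoint)

lemma shiftProd {ι : Type*} [DecidableEq ι] (J : Finset ι) (u : ι → ℂ) (x : ℂ) {m : ℕ}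
    (hm : m ≤ J.card) :
    ∑ s ∈ Finset.powersetCard m J, ∏ i ∈ s, (u i - x) =
      ∑ j ∈ range (m+1), (-x)^(m-j) * ((J.card - j).choose (m-j) : ℂ) *
        ∑ t ∈ Finset.powersetCard j J, ∏ i ∈ t, u i := by
  have step1 : ∀ s ∈ Finset.powersetCard m J,
      ∏ i ∈ s, (u i - x) = ∑ t ∈ s.powerset, (∏ i ∈ t, u i) * (-x)^(m - t.card) := by
    intro s hs
    rw [mem_powersetCard] at hs
    have : ∀ i, u i - x = u i + (-x) := fun i => by ring
    simp_rw [this]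
    rw [Finset.prod_add]
    apply Finset.sum_congr rfl
    intro t ht
    rw [mem_powerset] at ht
    rw [Finset.prod_const, Finset.card_sdiff_of_subset ht, hs.2]
  rw [Finset.sum_congr rfl step1]
  rw [Finset.sum_comm' (t := fun s => s.powerset) (s' := fun t => (J.powersetCard m).filter (fun s => t ⊆ s))
    (t' := J.powerset) ?hcond]
  case hcond =>
    intro s t
    simp only [mem_filter, mem_powerset, mem_powersetCard]
    constructor
    · rintro ⟨⟨hsJ, hsc⟩, hts⟩
      exact ⟨⟨⟨hsJ, hsc⟩, hts⟩, hts.trans hsJ⟩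
    · rintro ⟨⟨hs, hts⟩, _⟩
      exact ⟨hs, hts⟩
  -- now: ∑ t ∈ J.powerset, ∑ s ∈ filter..., (∏ u) * (-x)^(m - t.card)
  rw [Finset.sum_powerset]
  have inner : ∀ j ∈ range (J.card + 1), ∀ t ∈ Finset.powersetCard j J,
      (∑ _s ∈ (J.powersetCard m).filter (fun s => t ⊆ s), (∏ i ∈ t, u i) * (-x)^(m - t.card))
        = (if t.card ≤ m then ((J.card - t.card).choose (m - t.card) : ℂ) else 0) *
            ((∏ i ∈ t, u i) * (-x)^(m - t.card)) := by
    intro j hj t htm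
    rw [mem_powersetCard] at htm
    rw [Finset.sum_const]
    by_cases hc : t.card ≤ m
    · rw [if_pos hc, count_supersets J t htm.1 hc, nsmul_eq_mul]
    · rw [if_neg hc]
      have : (J.powersetCard m).filter (fun s => t ⊆ s) = ∅ := by
        apply Finset.filter_eq_empty_iff.2
        intro s hs
        rw [mem_powersetCard] at hs
        intro hts
        have := Finset.card_le_card hts
        omega
      rw [this]
      simp
  calc ∑ j ∈ range (J.card+1), ∑ t ∈ Finset.powersetCard j J,
        (∑ _s ∈ (J.powersetCard m).filter (fun s => t ⊆ s), (∏ i ∈ t, u i) * (-x)^(m - t.card))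
      = ∑ j ∈ range (J.card+1), ∑ t ∈ Finset.powersetCard j J,
          (if t.card ≤ m then ((J.card - t.card).choose (m - t.card) : ℂ) else 0) *
            ((∏ i ∈ t, u i) * (-x)^(m - t.card)) := by
        apply Finset.sum_congr rfl
        intro j hj
        exact Finset.sum_congr rfl (inner j hj)
    _ = ∑ j ∈ range (m+1), (-x)^(m-j) * ((J.card - j).choose (m-j) : ℂ) *
          ∑ t ∈ Finset.powersetCard j J, ∏ i ∈ t, u i := by
        rw [← Finset.sum_subset (Finset.range_subset_range.2 (by omega : m+1 ≤ J.card+1))]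
        · apply Finset.sum_congr rfl
          intro j hj
          rw [mem_range] at hj
          rw [Finset.mul_sum]
          apply Finset.sum_congr rfl
          intro t htm
          rw [mem_powersetCard] at htm
          rw [htm.2, if_pos (by omega : j ≤ m)]
          ring
        · intro j hj hjm
          rw [mem_range] at hj hjm
          apply Finset.sum_eq_zero
          intro t htm
          rw [mem_powersetCard] at htm
          rw [htm.2, if_neg (by omega)]
          ring

lemma esymm_split {ι : Type*} [Fintype ι] [DecidableEq ι] (i0 : ι) (v : ι → ℂ) (m : ℕ) :
    ∑ s ∈ Finset.powersetCard (m+1) (Finset.univ : Finset ι), ∏ i ∈ s, v i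
      = (∑ s ∈ Finset.powersetCard (m+1) (Finset.univ.erase i0), ∏ i ∈ s, v i)
        + v i0 * ∑ s ∈ Finset.powersetCard m (Finset.univ.erase i0), ∏ i ∈ s, v i := by
  set E : Finset ι := Finset.univ.erase i0 with hE
  have h0 : i0 ∉ E := Finset.notMem_erase _ _
  have huniv : (Finset.univ : Finset ι) = insert i0 E :=
    (Finset.insert_erase (Finset.mem_univ i0)).symm
  rw [huniv, Finset.powersetCard_succ_insert h0]
  rw [Finset.sum_union]
  · congr 1
    rw [Finset.sum_image]
    · rw [Finset.mul_sum]
      apply Finset.sum_congr rfl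
      intro s hs
      rw [Finset.mem_powersetCard] at hs
      rw [Finset.prod_insert (fun hi => h0 (hs.1 hi))]
    · intro s hs t ht hst
      rw [Finset.mem_coe, Finset.mem_powersetCard] at hs ht
      have hs0 : i0 ∉ s := fun hi => h0 (hs.1 hi)
      have ht0 : i0 ∉ t := fun hi => h0 (ht.1 hi)
      rw [← Finset.erase_insert hs0, ← Finset.erase_insert ht0, hst]
  · rw [Finset.disjoint_left]
    intro s hs hsi
    rw [Finset.mem_powersetCard] at hs
    rw [Finset.mem_image] at hsi
    obtain ⟨t, ht, rfl⟩ := hsi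
    exact h0 (hs.1 (Finset.mem_insert_self i0 t))

lemma esymmT_expand {ι : Type*} [Fintype ι] [DecidableEq ι] (i0 : ι) (u T : ι → ℂ) (x : ℂ)
    (hT0 : T i0 = -x) (hTv : ∀ i, i ≠ i0 → T i = u i - x) (m : ℕ)
    (hm : m ≤ (Finset.univ.erase i0 : Finset ι).card) :
    ∑ s ∈ Finset.powersetCard m (Finset.univ : Finset ι), ∏ i ∈ s, T i
      = ∑ j ∈ range (m+1),
          (-x)^(m-j) * (((Finset.univ.erase i0 : Finset ι).card + 1 - j).choose (m-j) : ℂ) *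
          ∑ t ∈ Finset.powersetCard j (Finset.univ.erase i0), ∏ i ∈ t, u i := by
  set E : Finset ι := Finset.univ.erase i0 with hE
  have hprod : ∀ (mm : ℕ),
      ∑ s ∈ Finset.powersetCard mm E, ∏ i ∈ s, T i
        = ∑ s ∈ Finset.powersetCard mm E, ∏ i ∈ s, (u i - x) := by
    intro mm
    apply Finset.sum_congr rfl
    intro s hs
    rw [mem_powersetCard] at hs
    apply Finset.prod_congr rfl
    intro i hi
    exact hTv i (Finset.ne_of_mem_erase (hs.1 hi))
  cases m with
  | zero =>
    simp
  | succ m' =>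
    rw [esymm_split i0 T m', hprod, hprod, hT0,
      shiftProd E u x hm, shiftProd E u x (le_trans (Nat.le_succ m') hm)]
    · rw [Finset.sum_range_succ, Finset.sum_range_succ
        (fun j => (-x)^(m'+1-j) * ((E.card + 1 - j).choose (m'+1-j) : ℂ) *
          ∑ t ∈ Finset.powersetCard j E, ∏ i ∈ t, u i) (m'+1)]
      rw [add_right_comm]
      congr 1
      · rw [Finset.mul_sum, ← Finset.sum_add_distrib]
        apply Finset.sum_congr rfl
        intro j hj
        rw [mem_range] at hj
        have e1 : #E + 1 - j = (#E - j) + 1 := by omega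
        have e2 : m' + 1 - j = (m' - j) + 1 := by omega
        rw [e1, e2, Nat.choose_succ_succ, pow_succ]
        push_cast
        ring
      · simp


lemma inner_step (m : ℕ) (x S : ℂ) :
    ∑ k ∈ range (m+1), (-1:ℂ)^k * ((k:ℂ)+1) / ((k:ℂ)+3) * (-x)^k *
      ((-x)^(m-k) * (((m+1).choose (m-k) : ℕ) : ℂ) * S)
      = (-1:ℂ)^m * (((m:ℂ)+1)/((m:ℂ)+3) - (m:ℂ)/((m:ℂ)+2)) * x^m * S := by
  have hterm : ∀ k ∈ range (m+1),
      (-1:ℂ)^k * ((k:ℂ)+1) / ((k:ℂ)+3) * (-x)^k *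
        ((-x)^(m-k) * (((m+1).choose (m-k) : ℕ) : ℂ) * S)
      = ((-1:ℂ)^k * (((k:ℂ)+1)/((k:ℂ)+3)) * (((m+1).choose (m-k) : ℕ) : ℂ)) *
          ((-1:ℂ)^m * x^m * S) := by
    intro k hk
    rw [mem_range] at hk
    have e : (-x)^k * (-x)^(m-k) = (-1:ℂ)^m * x^m := by
      rw [← pow_add, show k + (m-k) = m by omega, neg_pow]
    calc (-1:ℂ)^k * ((k:ℂ)+1) / ((k:ℂ)+3) * (-x)^k *
          ((-x)^(m-k) * (((m+1).choose (m-k) : ℕ) : ℂ) * S)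
        = ((-1:ℂ)^k * (((k:ℂ)+1)/((k:ℂ)+3)) * (((m+1).choose (m-k) : ℕ) : ℂ)) *
            (((-x)^k * (-x)^(m-k)) * S) := by ring
      _ = _ := by rw [e]
  rw [Finset.sum_congr rfl hterm, ← Finset.sum_mul, scalar m]
  ring

theorem stmt11 (n : ℕ) (hn : 3 ≤ n) (u : Fin (n - 1) → ℂ) :
    let i0 : Fin (n - 1) := ⟨0, by omega⟩
    let T : Fin (n - 1) → ℂ := fun j => if j = i0 then -u i0 else u j - u i0
    let G : (Fin (n - 1) → ℂ) → ℂ := fun v =>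
      ∑ k ∈ Finset.range (n - 1),
        (-1 : ℂ) ^ k * ((k : ℂ) + 1) / ((k : ℂ) + 3) * (v i0) ^ k *
          esymmF (n - 1) (n - 2 - k) v
    G T = G u := by
  intro i0 T G
  have hG : ∀ v : Fin (n-1) → ℂ, G v = ∑ k ∈ Finset.range (n - 1),
      (-1 : ℂ) ^ k * ((k : ℂ) + 1) / ((k : ℂ) + 3) * (v i0) ^ k *
        esymmF (n - 1) (n - 2 - k) v := fun v => rfl
  set x := u i0 with hx
  have hT0 : T i0 = -x := by simp [T, hx]
  have hTv : ∀ i, i ≠ i0 → T i = u i - x := by intro i hi; simp [T, hi, hx]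
  have hcard : (Finset.univ.erase i0 : Finset (Fin (n-1))).card = n - 2 := by
    rw [Finset.card_erase_of_mem (Finset.mem_univ _), Finset.card_univ, Fintype.card_fin]
    omega
  have hEdef : ∀ (m : ℕ) (v : Fin (n-1) → ℂ), esymmF (n-1) m v
      = ∑ s ∈ Finset.powersetCard m (Finset.univ : Finset (Fin (n-1))), ∏ i ∈ s, v i :=
    fun _ _ => rfl
  -- the common form
  set D : ℕ → ℂ := fun j => (-1:ℂ)^(n-2-j) *
      ((((n-2-j : ℕ):ℂ)+1)/(((n-2-j : ℕ):ℂ)+3) - ((n-2-j : ℕ):ℂ)/(((n-2-j : ℕ):ℂ)+2)) *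
      x^(n-2-j) * ∑ t ∈ Finset.powersetCard j (Finset.univ.erase i0), ∏ i ∈ t, u i with hD
  have hGT : G T = ∑ j ∈ range (n-1), D j := by
    rw [hG T]
    calc ∑ k ∈ Finset.range (n - 1),
          (-1 : ℂ) ^ k * ((k : ℂ) + 1) / ((k : ℂ) + 3) * (T i0) ^ k *
            esymmF (n - 1) (n - 2 - k) T
        = ∑ k ∈ range (n-1), ∑ j ∈ range (n-1-k),
            (-1:ℂ)^k * ((k:ℂ)+1) / ((k:ℂ)+3) * (-x)^k *
              ((-x)^(n-2-k-j) * (((n-1-j).choose (n-2-k-j) : ℕ) : ℂ) *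
                ∑ t ∈ Finset.powersetCard j (Finset.univ.erase i0), ∏ i ∈ t, u i) := by
          apply Finset.sum_congr rfl
          intro k hk
          rw [mem_range] at hk
          rw [hT0, hEdef, esymmT_expand i0 u T x hT0 hTv (n-2-k) (by omega : n-2-k ≤ (Finset.univ.erase i0 : Finset (Fin (n-1))).card),
            show n-2-k+1 = n-1-k by omega, Finset.mul_sum]
          apply Finset.sum_congr rfl
          intro j hj
          rw [mem_range] at hj
          rw [hcard]
          rw [show n-2+1-j = n-1-j by omega]
      _ = ∑ j ∈ range (n-1), ∑ k ∈ range (n-1-j),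
            (-1:ℂ)^k * ((k:ℂ)+1) / ((k:ℂ)+3) * (-x)^k *
              ((-x)^(n-2-k-j) * (((n-1-j).choose (n-2-k-j) : ℕ) : ℂ) *
                ∑ t ∈ Finset.powersetCard j (Finset.univ.erase i0), ∏ i ∈ t, u i) :=
          Finset.sum_comm' (by intro k j; simp only [Finset.mem_range]; omega)
      _ = ∑ j ∈ range (n-1), D j := by
          apply Finset.sum_congr rfl
          intro j hj
          rw [mem_range] at hj
          calc ∑ k ∈ range (n-1-j),
                (-1:ℂ)^k * ((k:ℂ)+1) / ((k:ℂ)+3) * (-x)^k *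
                  ((-x)^(n-2-k-j) * (((n-1-j).choose (n-2-k-j) : ℕ) : ℂ) *
                    ∑ t ∈ Finset.powersetCard j (Finset.univ.erase i0), ∏ i ∈ t, u i)
              = ∑ k ∈ range ((n-2-j)+1),
                (-1:ℂ)^k * ((k:ℂ)+1) / ((k:ℂ)+3) * (-x)^k *
                  ((-x)^((n-2-j)-k) * ((((n-2-j)+1).choose ((n-2-j)-k) : ℕ) : ℂ) *
                    ∑ t ∈ Finset.powersetCard j (Finset.univ.erase i0), ∏ i ∈ t, u i) := by
                rw [show n-1-j = (n-2-j)+1 by omega]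
                apply Finset.sum_congr rfl
                intro k hk
                rw [mem_range] at hk
                rw [show n-2-k-j = (n-2-j)-k by omega]
            _ = D j := by
                rw [inner_step (n-2-j) x
                  (∑ t ∈ Finset.powersetCard j (Finset.univ.erase i0), ∏ i ∈ t, u i), hD]
  have main1 : ∀ F : ℕ → ℂ, ∑ k ∈ range (n-1), F k = ∑ k ∈ range (n-2), F k + F (n-2) := by
    intro F
    rw [show n-1 = (n-2)+1 by omega]
    exact Finset.sum_range_succ F (n-2)
  have refl1 : ∀ F : ℕ → ℂ, ∑ k ∈ range (n-1), F k = ∑ j ∈ range (n-1), F (n-2-j) := by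
    intro F
    rw [← Finset.sum_range_reflect F (n-1)]
    apply Finset.sum_congr rfl
    intro j hj
    rw [show n-1-1 = n-2 by omega]
  have refl2 : ∀ F : ℕ → ℂ, ∑ k ∈ range (n-2), F k = ∑ j ∈ range (n-2), F (n-3-j) := by
    intro F
    rw [← Finset.sum_range_reflect F (n-2)]
    apply Finset.sum_congr rfl
    intro j hj
    rw [show n-2-1 = n-3 by omega]
  have hEu : ∀ k, k < n-2 → esymmF (n-1) (n-2-k) u
      = (∑ s ∈ Finset.powersetCard (n-2-k) (Finset.univ.erase i0), ∏ i ∈ s, u i)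
        + x * ∑ s ∈ Finset.powersetCard (n-3-k) (Finset.univ.erase i0), ∏ i ∈ s, u i := by
    intro k hk
    rw [hEdef, show n-2-k = (n-3-k)+1 by omega, esymm_split i0 u (n-3-k), ← hx]
  have hGU : G u = ∑ j ∈ range (n-1), D j := by
    rw [hG u, ← hx]
    calc ∑ k ∈ range (n-1),
          (-1:ℂ)^k * ((k:ℂ)+1) / ((k:ℂ)+3) * x^k * esymmF (n-1) (n-2-k) u
        = ∑ k ∈ range (n-2),
            ((-1:ℂ)^k * ((k:ℂ)+1) / ((k:ℂ)+3) * x^k *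
                ∑ s ∈ Finset.powersetCard (n-2-k) (Finset.univ.erase i0), ∏ i ∈ s, u i
             + (-1:ℂ)^k * ((k:ℂ)+1) / ((k:ℂ)+3) * x^(k+1) *
                ∑ s ∈ Finset.powersetCard (n-3-k) (Finset.univ.erase i0), ∏ i ∈ s, u i)
          + (-1:ℂ)^(n-2) * (((n-2:ℕ):ℂ)+1) / (((n-2:ℕ):ℂ)+3) * x^(n-2) *
              ∑ s ∈ Finset.powersetCard (n-2-(n-2)) (Finset.univ.erase i0), ∏ i ∈ s, u i := by
          rw [main1 (fun k => (-1:ℂ)^k * ((k:ℂ)+1) / ((k:ℂ)+3) * x^k * esymmF (n-1) (n-2-k) u)]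
          congr 1
          · apply Finset.sum_congr rfl
            intro k hk
            rw [mem_range] at hk
            rw [hEu k hk]
            ring
          · rw [show n-2-(n-2) = 0 by omega, hEdef]
            simp [Finset.powersetCard_zero]
      _ = ∑ k ∈ range (n-1),
            (-1:ℂ)^k * ((k:ℂ)+1) / ((k:ℂ)+3) * x^k *
              ∑ s ∈ Finset.powersetCard (n-2-k) (Finset.univ.erase i0), ∏ i ∈ s, u i
          + ∑ k ∈ range (n-2),
            (-1:ℂ)^k * ((k:ℂ)+1) / ((k:ℂ)+3) * x^(k+1) *
              ∑ s ∈ Finset.powersetCard (n-3-k) (Finset.univ.erase i0), ∏ i ∈ s, u i := by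
          rw [Finset.sum_add_distrib,
            main1 (fun k => (-1:ℂ)^k * ((k:ℂ)+1) / ((k:ℂ)+3) * x^k *
              ∑ s ∈ Finset.powersetCard (n-2-k) (Finset.univ.erase i0), ∏ i ∈ s, u i)]
          ring
      _ = ∑ j ∈ range (n-1),
            (-1:ℂ)^(n-2-j) * (((n-2-j:ℕ):ℂ)+1) / (((n-2-j:ℕ):ℂ)+3) * x^(n-2-j) *
              ∑ s ∈ Finset.powersetCard (n-2-(n-2-j)) (Finset.univ.erase i0), ∏ i ∈ s, u i
          + ∑ j ∈ range (n-2),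
            (-1:ℂ)^(n-3-j) * (((n-3-j:ℕ):ℂ)+1) / (((n-3-j:ℕ):ℂ)+3) * x^((n-3-j)+1) *
              ∑ s ∈ Finset.powersetCard (n-3-(n-3-j)) (Finset.univ.erase i0), ∏ i ∈ s, u i := by
          rw [refl1 (fun k => (-1:ℂ)^k * ((k:ℂ)+1) / ((k:ℂ)+3) * x^k *
              ∑ s ∈ Finset.powersetCard (n-2-k) (Finset.univ.erase i0), ∏ i ∈ s, u i),
            refl2 (fun k => (-1:ℂ)^k * ((k:ℂ)+1) / ((k:ℂ)+3) * x^(k+1) *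
              ∑ s ∈ Finset.powersetCard (n-3-k) (Finset.univ.erase i0), ∏ i ∈ s, u i)]
      _ = ∑ j ∈ range (n-1),
            (-1:ℂ)^(n-2-j) * (((n-2-j:ℕ):ℂ)+1) / (((n-2-j:ℕ):ℂ)+3) * x^(n-2-j) *
              ∑ s ∈ Finset.powersetCard j (Finset.univ.erase i0), ∏ i ∈ s, u i
          + ∑ j ∈ range (n-2),
            -((-1:ℂ)^(n-2-j) * ((n-2-j:ℕ):ℂ) / (((n-2-j:ℕ):ℂ)+2) * x^(n-2-j) *
              ∑ s ∈ Finset.powersetCard j (Finset.univ.erase i0), ∏ i ∈ s, u i) := by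
          congr 1
          · apply Finset.sum_congr rfl
            intro j hj
            rw [mem_range] at hj
            rw [show n-2-(n-2-j) = j by omega]
          · apply Finset.sum_congr rfl
            intro j hj
            rw [mem_range] at hj
            rw [show n-3-(n-3-j) = j by omega, show n-2-j = (n-3-j)+1 by omega]
            push_cast
            rw [pow_succ, pow_succ]
            ring
      _ = ∑ j ∈ range (n-1),
            (-1:ℂ)^(n-2-j) * (((n-2-j:ℕ):ℂ)+1) / (((n-2-j:ℕ):ℂ)+3) * x^(n-2-j) *
              ∑ s ∈ Finset.powersetCard j (Finset.univ.erase i0), ∏ i ∈ s, u i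
          + ∑ j ∈ range (n-1),
            -((-1:ℂ)^(n-2-j) * ((n-2-j:ℕ):ℂ) / (((n-2-j:ℕ):ℂ)+2) * x^(n-2-j) *
              ∑ s ∈ Finset.powersetCard j (Finset.univ.erase i0), ∏ i ∈ s, u i) := by
          congr 1
          rw [main1 (fun j => -((-1:ℂ)^(n-2-j) * ((n-2-j:ℕ):ℂ) / (((n-2-j:ℕ):ℂ)+2) * x^(n-2-j) *
              ∑ s ∈ Finset.powersetCard j (Finset.univ.erase i0), ∏ i ∈ s, u i))]
          rw [show n-2-(n-2) = 0 by omega]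
          norm_num
      _ = ∑ j ∈ range (n-1), D j := by
          rw [← Finset.sum_add_distrib]
          apply Finset.sum_congr rfl
          intro j hj
          rw [hD]
          ring
  exact hGT.trans hGU.symm
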